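/- For linear operators A₁,...,A_{2n} on a finite-dimensional complex vector space V, the Nambu generalized commutator [A₁,...,A_{2n}] = Σ_{σ∈S_{2n}} sign(σ) A_{σ(1)}⋯A_{σ(2n)} equals the sum over all permutations σ ∈ S_{2n} with σ(1)<σ(2), σ(3)<σ(4), ..., σ(2n−1)<σ(2n), of sign(σ)·[A_{σ(1)},A_{σ(2)}][A_{σ(3)},A_{σ(4)}]⋯[A_{σ(2n−1)},A_{σ(2n)}], where [A,B] = AB − BA. -/

import Mathlib

/-- The Nambu generalized commutator of operators `A 0, ..., A (n-1)`:
`∑_{σ ∈ S_n} sign(σ) A_{σ(1)} ⋯ A_{σ(n)}`. -/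
noncomputable def nambu {R : Type*} [Ring R] {n : ℕ} (A : Fin n → R) : R :=
  ∑ σ : Equiv.Perm (Fin n), (Equiv.Perm.sign σ : ℤ) • (List.ofFn fun i => A (σ i)).prod

/-- The commutator `[A,B] = AB - BA`. -/
def commOp {R : Type*} [Ring R] (A B : R) : R := A * B - B * A

section Aux

lemma pairProd {R : Type*} [Ring R] : ∀ (n : ℕ) (f : Fin (2*n) → R),
    (List.ofFn f).prod =
      (List.ofFn fun j : Fin n =>
        f ⟨2*j.1, by omega⟩ * f ⟨2*j.1+1, by omega⟩).prod
  | 0, f => by simp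
  | n+1, f => by
    rw [List.ofFn_succ (f := f), List.ofFn_succ, List.prod_cons, List.prod_cons,
      pairProd n, List.ofFn_succ, List.prod_cons, ← mul_assoc]
    congr 1

def flipFn {n : ℕ} (i : Fin (2*n)) : Fin (2*n) :=
  ⟨2*(i.1/2) + (1 - i.1 % 2), by have := i.2; omega⟩

def pswapFn {n : ℕ} (s : Finset (Fin n)) (i : Fin (2*n)) : Fin (2*n) :=
  if (⟨i.1/2, by have := i.2; omega⟩ : Fin n) ∈ s then flipFn i else i

lemma flip_div {n : ℕ} (i : Fin (2*n)) : (flipFn i).1 / 2 = i.1 / 2 := by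
  simp only [flipFn]; omega

lemma pswapFn_invol {n : ℕ} (s : Finset (Fin n)) : Function.Involutive (pswapFn s) := by
  intro i
  unfold pswapFn
  split
  · rename_i h
    rw [if_pos (by simpa [Fin.ext_iff, flip_div] using h)]
    apply Fin.ext
    simp only [flipFn]
    omega
  · rfl

noncomputable def pswap {n : ℕ} (s : Finset (Fin n)) : Equiv.Perm (Fin (2*n)) :=
  (pswapFn_invol s).toPerm

lemma pswap_apply {n : ℕ} (s : Finset (Fin n)) (i : Fin (2*n)) :
    pswap s i = pswapFn s i := rfl

lemma pswap_mul_self {n : ℕ} (s : Finset (Fin n)) : pswap s * pswap s = 1 := by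
  apply Equiv.ext
  intro i
  simpa [pswap_apply] using pswapFn_invol s i

lemma pswap_apply_lt {n : ℕ} (s : Finset (Fin n)) (j : Fin n) :
    pswap s ⟨2*j.1, by omega⟩ =
      if j ∈ s then (⟨2*j.1+1, by omega⟩ : Fin (2*n))
        else ⟨2*j.1, by omega⟩ := by
  rw [pswap_apply]
  unfold pswapFn
  have hj : (⟨2*j.1/2, by omega⟩ : Fin n) = j :=
    Fin.ext (show 2*j.1/2 = j.1 by omega)
  rw [hj]
  split <;> [skip; rfl]
  apply Fin.ext; simp only [flipFn]; omega

lemma pswap_apply_rt {n : ℕ} (s : Finset (Fin n)) (j : Fin n) :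
    pswap s ⟨2*j.1+1, by omega⟩ =
      if j ∈ s then (⟨2*j.1, by omega⟩ : Fin (2*n))
        else ⟨2*j.1+1, by omega⟩ := by
  rw [pswap_apply]
  unfold pswapFn
  have hj : (⟨(2*j.1+1)/2, by omega⟩ : Fin n) = j :=
    Fin.ext (show (2*j.1+1)/2 = j.1 by omega)
  rw [hj]
  split <;> [skip; rfl]
  apply Fin.ext; simp only [flipFn]; omega

lemma pswap_empty {n : ℕ} : pswap (∅ : Finset (Fin n)) = 1 := by
  apply Equiv.ext
  intro i
  simp [pswap_apply, pswapFn]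

lemma pswap_insert {n : ℕ} (s : Finset (Fin n)) (a : Fin n) (ha : a ∉ s) :
    pswap (insert a s) =
      Equiv.swap (⟨2*a.1, by omega⟩ : Fin (2*n)) ⟨2*a.1+1, by omega⟩
        * pswap s := by
  apply Equiv.ext
  intro i
  rw [Equiv.Perm.mul_apply, pswap_apply, pswap_apply]
  unfold pswapFn
  have hi := i.2
  by_cases h1 : (⟨i.1/2, by omega⟩ : Fin n) = a
  · rw [if_pos (by simp [h1]), if_neg (by rw [h1]; exact ha)]
    have hv : i.1 = 2*a.1 ∨ i.1 = 2*a.1+1 := by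
      have := congrArg Fin.val h1
      simp only [Fin.val_mk] at this
      omega
    rcases hv with hv | hv
    · rw [show i = (⟨2*a.1, by omega⟩ : Fin (2*n)) from Fin.ext hv, Equiv.swap_apply_left]
      apply Fin.ext; simp only [flipFn, Fin.val_mk]; omega
    · rw [show i = (⟨2*a.1+1, by omega⟩ : Fin (2*n)) from Fin.ext hv, Equiv.swap_apply_right]
      apply Fin.ext; simp only [flipFn, Fin.val_mk]; omega
  · have h1' : i.1/2 ≠ a.1 := fun h => h1 (Fin.ext h)
    by_cases h2 : (⟨i.1/2, by omega⟩ : Fin n) ∈ s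
    · rw [if_pos (by simp [h2]), if_pos h2]
      refine (Equiv.swap_apply_of_ne_of_ne ?_ ?_).symm <;>
      · intro h
        have := congrArg Fin.val h
        simp only [flipFn, Fin.val_mk] at this
        omega
    · rw [if_neg (by simp [h1, h2]), if_neg h2]
      refine (Equiv.swap_apply_of_ne_of_ne ?_ ?_).symm <;>
      · intro h
        have := congrArg Fin.val h
        simp only [Fin.val_mk] at this
        omega

lemma pswap_sign {n : ℕ} (s : Finset (Fin n)) :
    Equiv.Perm.sign (pswap s) = (-1) ^ s.card := by
  induction s using Finset.induction_on with
  | empty => simp [pswap_empty]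
  | @insert a s ha ih =>
    rw [pswap_insert s a ha, map_mul, ih, Finset.card_insert_of_notMem ha,
      Equiv.Perm.sign_swap (by intro h; have := congrArg Fin.val h; simp at this)]
    rw [pow_add, pow_one, mul_comm]

lemma expand {R : Type*} [Ring R] : ∀ (n : ℕ) (x y : Fin n → R),
    (List.ofFn fun j => commOp (x j) (y j)).prod =
    ∑ b : Fin n → Bool, (∏ j, if b j then (-1:ℤ) else 1) •
      (List.ofFn fun j => if b j then y j * x j else x j * y j).prod
  | 0, x, y => by simp
  | n+1, x, y => by
    rw [List.ofFn_succ, List.prod_cons,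
      expand n (fun j => x j.succ) (fun j => y j.succ)]
    rw [← (Fin.consEquiv (fun _ : Fin (n+1) => Bool)).sum_comp
      (fun b : Fin (n+1) → Bool => (∏ j, if b j then (-1:ℤ) else 1) •
        (List.ofFn fun j => if b j then y j * x j else x j * y j).prod)]
    rw [Fintype.sum_prod_type]
    simp only [Fin.consEquiv_apply, Fintype.sum_bool, Fin.prod_univ_succ, Fin.cons_zero,
      Fin.cons_succ, if_true, Bool.false_eq_true, if_false, List.ofFn_succ, List.prod_cons]
    rw [commOp, sub_mul, Finset.mul_sum, Finset.mul_sum]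
    simp only [mul_smul_comm, neg_one_mul, one_mul, neg_smul, ← Finset.sum_neg_distrib]
    rw [Finset.sum_neg_distrib]
    abel

def sOf {n : ℕ} (b : Fin n → Bool) : Finset (Fin n) := Finset.univ.filter (fun j => b j)

lemma mem_sOf {n : ℕ} (b : Fin n → Bool) (j : Fin n) : j ∈ sOf b ↔ b j = true := by
  simp [sOf]

lemma prod_sign {n : ℕ} (b : Fin n → Bool) :
    (∏ j, if b j then (-1:ℤ) else 1) = ((Equiv.Perm.sign (pswap (sOf b)) : ℤˣ) : ℤ) := by
  rw [pswap_sign, Finset.prod_ite, Finset.prod_const, Finset.prod_const, one_pow, mul_one]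
  simp [sOf]

lemma pairTerm {R : Type*} [Ring R] {n : ℕ} (A : Fin (2*n) → R)
    (σ : Equiv.Perm (Fin (2*n))) (b : Fin n → Bool) :
    ((Equiv.Perm.sign σ : ℤ) * ∏ j, if b j then (-1:ℤ) else 1) •
      (List.ofFn fun j : Fin n =>
        if b j then A (σ ⟨2*j.1+1, by omega⟩) * A (σ ⟨2*j.1, by omega⟩)
          else A (σ ⟨2*j.1, by omega⟩) * A (σ ⟨2*j.1+1, by omega⟩)).prod
    = (Equiv.Perm.sign (σ * pswap (sOf b)) : ℤ) •
        (List.ofFn fun i => A ((σ * pswap (sOf b)) i)).prod := by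
  rw [pairProd n (fun i => A ((σ * pswap (sOf b)) i))]
  congr 1
  · rw [map_mul, prod_sign]
    push_cast
    ring
  · refine congrArg List.prod (congrArg List.ofFn (funext fun j => ?_))
    rw [Equiv.Perm.mul_apply, Equiv.Perm.mul_apply, pswap_apply_lt, pswap_apply_rt]
    by_cases h : b j <;> simp [mem_sOf, h]

end Aux

/-- Lemma `lemcomm1`: the Nambu generalized commutator of
`A₁, ..., A_{2n}`, operators on a finite-dimensional complex vector space, equals the sum
over permutations `σ` with `σ(1)<σ(2), ..., σ(2n-1)<σ(2n)` of
`sign(σ)·[A_{σ(1)},A_{σ(2)}]⋯[A_{σ(2n-1)},A_{σ(2n)}]`. -/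
theorem stmt0 {V : Type*} [AddCommGroup V] [Module ℂ V] [FiniteDimensional ℂ V]
    (n : ℕ) (hn : 0 < n) (A : Fin (2 * n) → Module.End ℂ V) :
    nambu A =
      ∑ σ ∈ Finset.univ.filter (fun σ : Equiv.Perm (Fin (2 * n)) =>
          ∀ j : Fin n, σ ⟨2 * j.1, by have := j.2; omega⟩ < σ ⟨2 * j.1 + 1, by have := j.2; omega⟩),
        (Equiv.Perm.sign σ : ℤ) •
          (List.ofFn fun j : Fin n =>
            commOp (A (σ ⟨2 * j.1, by have := j.2; omega⟩))
                 (A (σ ⟨2 * j.1 + 1, by have := j.2; omega⟩))).prod := by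
  classical
  set F := Finset.univ.filter (fun σ : Equiv.Perm (Fin (2 * n)) =>
      ∀ j : Fin n, σ ⟨2 * j.1, by have := j.2; omega⟩ < σ ⟨2 * j.1 + 1, by have := j.2; omega⟩)
    with hF
  have memF : ∀ σ : Equiv.Perm (Fin (2 * n)), σ ∈ F ↔
      ∀ j : Fin n, σ ⟨2 * j.1, by have := j.2; omega⟩ < σ ⟨2 * j.1 + 1, by have := j.2; omega⟩ := by
    intro σ
    simp [hF]
  symm
  calc
    ∑ σ ∈ F, (Equiv.Perm.sign σ : ℤ) •
        (List.ofFn fun j : Fin n =>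
          commOp (A (σ ⟨2 * j.1, by have := j.2; omega⟩))
               (A (σ ⟨2 * j.1 + 1, by have := j.2; omega⟩))).prod
      = ∑ σ ∈ F, ∑ b : Fin n → Bool,
          ((Equiv.Perm.sign σ : ℤ) * ∏ j, if b j then (-1:ℤ) else 1) •
            (List.ofFn fun j : Fin n =>
              if b j then A (σ ⟨2*j.1+1, by have := j.2; omega⟩) * A (σ ⟨2*j.1, by have := j.2; omega⟩)
                else A (σ ⟨2*j.1, by have := j.2; omega⟩) * A (σ ⟨2*j.1+1, by have := j.2; omega⟩)).prod := by
        refine Finset.sum_congr rfl fun σ _ => ?_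
        rw [expand n (fun j : Fin n => A (σ ⟨2*j.1, by have := j.2; omega⟩))
          (fun j : Fin n => A (σ ⟨2*j.1+1, by have := j.2; omega⟩)), Finset.smul_sum]
        refine Finset.sum_congr rfl fun b _ => ?_
        rw [smul_smul]
    _ = ∑ p ∈ F ×ˢ (Finset.univ : Finset (Fin n → Bool)),
          ((Equiv.Perm.sign p.1 : ℤ) * ∏ j, if p.2 j then (-1:ℤ) else 1) •
            (List.ofFn fun j : Fin n =>
              if p.2 j then A (p.1 ⟨2*j.1+1, by have := j.2; omega⟩) * A (p.1 ⟨2*j.1, by have := j.2; omega⟩)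
                else A (p.1 ⟨2*j.1, by have := j.2; omega⟩) * A (p.1 ⟨2*j.1+1, by have := j.2; omega⟩)).prod := by
        rw [Finset.sum_product]
    _ = ∑ τ : Equiv.Perm (Fin (2 * n)), (Equiv.Perm.sign τ : ℤ) •
          (List.ofFn fun i => A (τ i)).prod := by
        refine Finset.sum_nbij' (fun p => p.1 * pswap (sOf p.2))
          (fun τ => (τ * pswap (sOf (fun j : Fin n =>
            decide (τ ⟨2*j.1+1, by have := j.2; omega⟩ < τ ⟨2*j.1, by have := j.2; omega⟩))),
            fun j : Fin n =>
              decide (τ ⟨2*j.1+1, by have := j.2; omega⟩ < τ ⟨2*j.1, by have := j.2; omega⟩)))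
          (fun p _ => Finset.mem_univ _) ?_ ?_ ?_ ?_
        · -- maps univ into F ×ˢ univ
          intro τ _
          rw [Finset.mem_product]
          refine ⟨(memF _).2 fun j => ?_, Finset.mem_univ _⟩
          rw [Equiv.Perm.mul_apply, Equiv.Perm.mul_apply, pswap_apply_lt, pswap_apply_rt]
          have hmem : ∀ (j' : Fin n), j' ∈ sOf (fun j : Fin n =>
              decide (τ ⟨2*j.1+1, by have := j.2; omega⟩ < τ ⟨2*j.1, by have := j.2; omega⟩)) ↔
              τ ⟨2*j'.1+1, by have := j'.2; omega⟩ < τ ⟨2*j'.1, by have := j'.2; omega⟩ := by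
            intro j'
            rw [mem_sOf]
            simp
          by_cases h : τ ⟨2*j.1+1, by have := j.2; omega⟩ < τ ⟨2*j.1, by have := j.2; omega⟩
          · rw [if_pos ((hmem j).2 h), if_pos ((hmem j).2 h)]
            exact h
          · rw [if_neg (fun hc => h ((hmem j).1 hc)), if_neg (fun hc => h ((hmem j).1 hc))]
            refine lt_of_le_of_ne (not_lt.1 h) ?_
            intro he
            have : (⟨2*j.1, by have := j.2; omega⟩ : Fin (2*n)) = ⟨2*j.1+1, by have := j.2; omega⟩ :=
              τ.injective he
            have := congrArg Fin.val this
            simp at this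
        · -- left inverse (on F ×ˢ univ)
          intro p hp
          rw [Finset.mem_product] at hp
          have hσ := (memF p.1).1 hp.1
          have hb : (fun j : Fin n =>
              decide ((p.1 * pswap (sOf p.2)) ⟨2*j.1+1, by have := j.2; omega⟩
                < (p.1 * pswap (sOf p.2)) ⟨2*j.1, by have := j.2; omega⟩)) = p.2 := by
            funext j
            rw [Equiv.Perm.mul_apply, Equiv.Perm.mul_apply, pswap_apply_lt, pswap_apply_rt]
            by_cases h : p.2 j
            · simp only [mem_sOf, h, if_pos]
              simpa using hσ j
            · simp only [mem_sOf, h, Bool.false_eq_true, if_neg, not_false_iff]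
              simpa using not_lt.2 (le_of_lt (hσ j))
          refine Prod.ext ?_ hb
          show p.1 * pswap (sOf p.2) * pswap (sOf _) = p.1
          rw [hb, mul_assoc, pswap_mul_self, mul_one]
        · -- right inverse (on univ)
          intro τ _
          show τ * pswap (sOf _) * pswap (sOf _) = τ
          rw [mul_assoc, pswap_mul_self, mul_one]
        · -- values agree
          intro p hp
          exact pairTerm A p.1 p.2
    _ = nambu A := rfl
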